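/- Assume α ≥ 0 and c̄ε < hp, and let k* = k*(c̄) = ( −δε − c̄λ/(r+δ) + √( (δε − c̄λ/(r+δ))² + 4δλhp/(r+δ) ) ) / (2δ). Then k* > 0 and p/(k* + ε) > c, so that the positive part in the stationary relation (r+δ)u* = h(p/(k*+ε) − c)⁺ is not active (i.e. p/(k*+ε) − c is strictly positive). -/
import Mathlib


/-- The explicit equilibrium capacity `k*(c̄)` of the competitive model. -/
noncomputable def kstar (r δ lam h p ε cbar : ℝ) : ℝ :=
  (-(δ * ε) - cbar * lam / (r + δ)
      + Real.sqrt ((δ * ε - cbar * lam / (r + δ)) ^ 2 + 4 * δ * lam * h * p / (r + δ)))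
    / (2 * δ)

set_option maxHeartbeats 1000000 in
/-- Under `α ≥ 0` and `c̄ε < hp` (with `c̄ = hc + (r+δ)α`), the equilibrium capacity is
positive and the spot price at equilibrium exceeds the cost of production: `p/(k*+ε)>c`,
so the positive part in the stationary relation is not active. -/
theorem kstar_pos_and_price_gt_cost
    (r δ lam h p ε c α : ℝ)
    (hr : 0 < r) (hδ : 0 < δ) (hlam : 0 < lam) (hh : 0 < h) (hp : 0 < p) (hε : 0 < ε)
    (hα : 0 ≤ α) (hc : (h * c + (r + δ) * α) * ε < h * p) :
    0 < kstar r δ lam h p ε (h * c + (r + δ) * α) ∧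
      c < p / (kstar r δ lam h p ε (h * c + (r + δ) * α) + ε) := by
  have hrδ : (0:ℝ) < r + δ := by linarith
  set cbar := h * c + (r + δ) * α with hcbar
  set B := cbar * lam / (r + δ) with hB
  set s := Real.sqrt ((δ * ε - B) ^ 2 + 4 * δ * lam * h * p / (r + δ)) with hs
  have hs2 : s ^ 2 = (δ * ε - B) ^ 2 + 4 * δ * lam * h * p / (r + δ) := by
    rw [hs]; exact Real.sq_sqrt (by positivity)
  have hsnn : (0:ℝ) ≤ s := by rw [hs]; exact Real.sqrt_nonneg _
  have hk : kstar r δ lam h p ε cbar = (-(δ * ε) - B + s) / (2 * δ) := rfl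
  set k := kstar r δ lam h p ε cbar with hkdef
  clear_value k
  clear_value s
  clear_value B
  clear_value cbar
  have hBmul : B * (r + δ) = cbar * lam := by
    rw [hB]; field_simp
  have hs2' : s ^ 2 * (r + δ) = (δ * ε - B) ^ 2 * (r + δ) + 4 * δ * lam * h * p := by
    rw [hs2]; field_simp
  have hE : 0 < h * p - ε * cbar := by nlinarith
  have hBεδ : δ * ε * (B * (r + δ)) = δ * ε * (cbar * lam) := by rw [hBmul]
  have hsgt : δ * ε + B < s := by
    by_contra hcon
    push_neg at hcon
    have hq : 0 ≤ δ * ε + B := le_trans hsnn hcon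
    have hsq : s ^ 2 ≤ (δ * ε + B) ^ 2 := by nlinarith
    nlinarith [mul_le_mul_of_nonneg_right hsq hrδ.le,
      mul_pos (mul_pos hδ hlam) hE, hBεδ, hs2']
  have hkpos : 0 < k := by
    rw [hk]
    exact div_pos (by linarith) (by linarith)
  refine ⟨hkpos, ?_⟩
  have hkε : (0:ℝ) < k + ε := by linarith
  have hsk : s = 2 * δ * k + δ * ε + B := by
    rw [hk]; field_simp; ring
  have h1 := hs2'
  rw [hsk] at h1
  have hid : 4 * δ * (δ * (r + δ) * k * (k + ε) + lam * cbar * (k + ε))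
      = 4 * δ * (lam * (h * p)) := by
    linear_combination h1 - 4 * δ * (k + ε) * hBmul
  have hid2 : δ * (r + δ) * k * (k + ε) + lam * cbar * (k + ε) = lam * (h * p) :=
    mul_left_cancel₀ (by positivity : (4 * δ : ℝ) ≠ 0) hid
  have hmain : cbar * (k + ε) < h * p := by
    have hlt : lam * (cbar * (k + ε)) < lam * (h * p) := by
      linarith [hid2, mul_pos (mul_pos (mul_pos hδ hrδ) hkpos) hkε]
    exact lt_of_mul_lt_mul_left hlt hlam.le
  have h2 : h * c * (k + ε) ≤ cbar * (k + ε) := by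
    have hsub : (cbar - h * c) * (k + ε) = (r + δ) * α * (k + ε) := by rw [hcbar]; ring
    nlinarith [mul_nonneg (mul_nonneg hrδ.le hα) hkε.le]
  rw [lt_div_iff₀ hkε]
  have h3 : h * (c * (k + ε)) < h * p := by linarith
  exact lt_of_mul_lt_mul_left h3 hh.le
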